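/- Define π_i = β_i·θ_i² − β_{i+1}·θ_{i+1}·(θ_{i+1} − 1) for i ≥ 1. Then π_i ≥ 0 for every i ≥ 1, and for every k ≥ 2 one has Σ_{i=1}^{k−1} π_i·Δ_i ≤ (1/2)·(‖x_0 − x⋆‖² + E_k). -/

import Mathlib

open RealInnerProductSpace Finset

lemma aux_grad_ineq {E : Type*} [NormedAddCommGroup E] [InnerProductSpace ℝ E]
    [CompleteSpace E] {L : E → ℝ} {g : E → E} (hconv : ConvexOn ℝ Set.univ L)
    (hgrad : ∀ x, HasGradientAt L (g x) x) (x y : E) :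
    L x + ⟪y - x, g x⟫ ≤ L y := by
  set c : ℝ → E := fun t => t • (y - x) + x with hc
  have hceq : c = fun t => (AffineMap.lineMap x y : ℝ →ᵃ[ℝ] E) t := by
    funext t; simp [hc, AffineMap.lineMap_apply_module']
  have hφconv : ConvexOn ℝ Set.univ (L ∘ c) := by
    rw [hceq]
    have := hconv.comp_affineMap (AffineMap.lineMap x y : ℝ →ᵃ[ℝ] E)
    simpa [Function.comp] using this
  have hcder : HasDerivAt c (y - x) 0 := by
    simpa [hc] using ((hasDerivAt_id (0 : ℝ)).smul_const (y - x)).add_const x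
  have hL : HasFDerivAt L (InnerProductSpace.toDual ℝ E (g x) : E →L[ℝ] ℝ) (c 0) := by
    have h0 : c 0 = x := by simp [hc]
    rw [h0]
    exact (hasGradientAt_iff_hasFDerivAt.mp (hgrad x))
  have hder : HasDerivAt (L ∘ c) ⟪g x, y - x⟫ 0 := by
    simpa using hL.comp_hasDerivAt 0 hcder
  have hslope := hφconv.le_slope_of_hasDerivAt (Set.mem_univ (0:ℝ))
    (Set.mem_univ (1:ℝ)) one_pos hder
  have h1 : c 1 = y := by simp [hc]
  have h0 : c 0 = x := by simp [hc]
  rw [slope_def_field] at hslope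
  simp [Function.comp, h1, h0] at hslope
  rw [real_inner_comm]
  linarith

lemma aux_proj {E : Type*} [NormedAddCommGroup E] [InnerProductSpace ℝ E]
    {C : Set E} (hCne : C.Nonempty) (hCconv : Convex ℝ C)
    {P : E → E} (hPmem : ∀ z, P z ∈ C) (hPproj : ∀ z, ∀ y ∈ C, ‖z - P z‖ ≤ ‖z - y‖)
    (y : E) {z : E} (hz : z ∈ C) : ‖P y - z‖ ≤ ‖y - z‖ := by
  haveI : Nonempty C := hCne.to_subtype
  have hinf : ‖y - P y‖ = ⨅ w : C, ‖y - w‖ := by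
    apply le_antisymm
    · exact le_ciInf fun w => hPproj y w w.2
    · exact ciInf_le (f := fun w : C => ‖y - (w : E)‖)
        ⟨0, by rintro _ ⟨w, rfl⟩; positivity⟩ ⟨P y, hPmem y⟩
  have hchar := (norm_eq_iInf_iff_real_inner_le_zero hCconv (hPmem y)).mp hinf z hz
  have hexp : ‖y - z‖ ^ 2 = ‖y - P y‖ ^ 2 + 2 * ⟪y - P y, P y - z⟫ + ‖P y - z‖ ^ 2 := by
    rw [show y - z = (y - P y) + (P y - z) by abel, norm_add_sq_real]
  have hin : 0 ≤ ⟪y - P y, P y - z⟫ := by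
    have : ⟪y - P y, P y - z⟫ = - ⟪y - P y, z - P y⟫ := by
      rw [← inner_neg_right]; congr 1; abel
    linarith [hchar, this]
  have hsq : ‖P y - z‖ ^ 2 ≤ ‖y - z‖ ^ 2 := by nlinarith [sq_nonneg ‖y - P y‖]
  have := Real.sqrt_le_sqrt hsq
  rwa [Real.sqrt_sq (norm_nonneg _), Real.sqrt_sq (norm_nonneg _)] at this

theorem pnpg_momentum_gap_sum {E : Type*} [NormedAddCommGroup E]
    [InnerProductSpace ℝ E] [FiniteDimensional ℝ E]
    (L R f : E → ℝ) (gradL : E → E)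
    (hLconv : ConvexOn ℝ Set.univ L)
    (hLgrad : ∀ x, HasGradientAt L (gradL x) x)
    (hRconv : ConvexOn ℝ Set.univ R)
    (hf : ∀ x, f x = L x + R x)
    (C : Set E) (hCne : C.Nonempty) (hCcl : IsClosed C) (hCconv : Convex ℝ C)
    (P : E → E) (hPmem : ∀ z, P z ∈ C)
    (hPproj : ∀ z, ∀ y ∈ C, ‖z - P z‖ ≤ ‖z - y‖)
    (γ b : ℝ) (hγ : 2 ≤ γ) (hb0 : 0 ≤ b) (hb1 : b ≤ 1 / 4)
    (β εs θ : ℤ → ℝ)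
    (hβpos : ∀ i, 1 ≤ i → 0 < β i) (hεs : ∀ i, 1 ≤ i → 0 ≤ εs i)
    (hθ0 : θ 0 = 1) (hθ1 : θ 1 = 1)
    (hθ : ∀ i, 2 ≤ i → θ i = 1 / γ + Real.sqrt (b + (β (i - 1) / β i) * (θ (i - 1)) ^ 2))
    (hθge1 : ∀ i, 1 ≤ i → 1 ≤ θ i)
    (x w : ℤ → E)
    (hw : ∀ i, 1 ≤ i →
      w i = P (x (i - 1) + ((θ (i - 1) - 1) / θ i) • (x (i - 1) - x (i - 2))))
    (hprox : ∀ i, 1 ≤ i → ∀ z, R z ≥ R (x i) +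
      ⟪z - x i, (β i)⁻¹ • (w i - β i • gradL (w i) - x i)⟫ - (εs i) ^ 2 / (2 * β i))
    (hmaj : ∀ i, 1 ≤ i → L (x i) ≤ L (w i) + ⟪x i - w i, gradL (w i)⟫
      + ‖x i - w i‖ ^ 2 / (2 * β i))
    (hxC : ∀ i, 0 ≤ i → x i ∈ C)
    (xstar : E) (hxstarC : xstar ∈ C) (hmin : ∀ z, f xstar ≤ f z)
    (π : ℤ → ℝ)
    (hπ : ∀ i : ℤ, π i = β i * (θ i) ^ 2 - β (i + 1) * θ (i + 1) * (θ (i + 1) - 1)) :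
    (∀ i : ℤ, 1 ≤ i → 0 ≤ π i) ∧
      ∀ k : ℤ, 2 ≤ k →
        ∑ i ∈ Finset.Icc 1 (k - 1), π i * (f (x i) - f xstar) ≤
          (1 / 2) * (‖x 0 - xstar‖ ^ 2 + ∑ i ∈ Finset.Icc 1 k, (θ i) ^ 2 * (εs i) ^ 2) := by
  haveI : CompleteSpace E := FiniteDimensional.complete ℝ E
  have hfconv : ConvexOn ℝ Set.univ f := by
    have hfe : f = fun x => L x + R x := funext hf
    rw [hfe]; exact hLconv.add hRconv
  -- Part 1 : nonnegativity of π
  have hπnonneg : ∀ i : ℤ, 1 ≤ i → 0 ≤ π i := by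
    intro i hi
    have hβ1 : 0 < β i := hβpos i hi
    have hβ2 : 0 < β (i + 1) := hβpos _ (by omega)
    have hθi : 1 ≤ θ i := hθge1 i hi
    have hθ2 : 1 ≤ θ (i + 1) := hθge1 _ (by omega)
    have hγpos : (0:ℝ) < γ := by linarith
    have hrec := hθ (i + 1) (by omega)
    rw [show (i:ℤ) + 1 - 1 = i from by ring] at hrec
    have hrad : 0 ≤ b + (β i / β (i + 1)) * (θ i) ^ 2 := by positivity
    have hsq : (θ (i + 1) - 1 / γ) ^ 2 = b + (β i / β (i + 1)) * (θ i) ^ 2 := by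
      rw [hrec, add_sub_cancel_left]
      exact Real.sq_sqrt hrad
    have hsq' : β (i + 1) * (θ (i + 1) - 1 / γ) ^ 2 = β (i + 1) * b + β i * (θ i) ^ 2 := by
      rw [hsq]; field_simp
    rw [hπ]
    have expand : β i * (θ i) ^ 2 - β (i + 1) * θ (i + 1) * (θ (i + 1) - 1)
        = β (i + 1) * (θ (i + 1) * (1 - 2 / γ) + (1 / γ) ^ 2 - b) := by
      linear_combination (-1 : ℝ) * hsq'
    rw [expand]
    apply mul_nonneg hβ2.le
    have h2γ : 0 ≤ 1 - 2 / γ := by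
      rw [sub_nonneg, div_le_one hγpos]; exact hγ
    have hg2 : 1 / γ ≤ 1 / 2 := by
      apply one_div_le_one_div_of_le <;> linarith
    have hident : θ (i + 1) * (1 - 2 / γ) + (1 / γ) ^ 2 - b
        = (θ (i + 1) - 1) * (1 - 2 / γ) + ((1 - 1 / γ) ^ 2 - b) := by ring
    have hm1 : (0:ℝ) ≤ (θ (i + 1) - 1) * (1 - 2 / γ) :=
      mul_nonneg (by linarith) h2γ
    have hm2 : ((1:ℝ) / 2) ^ 2 ≤ (1 - 1 / γ) ^ 2 :=
      pow_le_pow_left₀ (by norm_num) (by linarith) 2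
    rw [hident]
    have : b ≤ (1 - 1 / γ) ^ 2 := by
      have : ((1:ℝ) / 2) ^ 2 = 1 / 4 := by norm_num
      linarith
    linarith
  -- Key one-step inequality
  have keyA : ∀ i : ℤ, 1 ≤ i → ∀ z : E,
      2 * β i * (f (x i) - f z) ≤ ‖w i - z‖ ^ 2 - ‖x i - z‖ ^ 2 + (εs i) ^ 2 := by
    intro i hi z
    have hβ : 0 < β i := hβpos i hi
    have hβne : β i ≠ 0 := ne_of_gt hβ
    have h2β : (0:ℝ) ≤ 2 * β i := by positivity
    have h1 := hmaj i hi
    have h2 := aux_grad_ineq hLconv hLgrad (w i) z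
    have h3 := hprox i hi z
    have hip : ⟪z - x i, (β i)⁻¹ • (w i - β i • gradL (w i) - x i)⟫
        = (β i)⁻¹ * (⟪z - x i, w i - x i⟫ - β i * ⟪z - x i, gradL (w i)⟫) := by
      rw [real_inner_smul_right]
      congr 1
      rw [show w i - β i • gradL (w i) - x i = (w i - x i) - β i • gradL (w i) by abel,
        inner_sub_right, real_inner_smul_right]
    rw [hip] at h3
    have hABC : ⟪x i - w i, gradL (w i)⟫ - ⟪z - w i, gradL (w i)⟫
        + ⟪z - x i, gradL (w i)⟫ = 0 := by
      rw [← inner_sub_left, ← inner_add_left,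
        show x i - w i - (z - w i) + (z - x i) = 0 by abel, inner_zero_left]
    have hD : ‖w i - z‖ ^ 2 - ‖x i - z‖ ^ 2
        = ‖x i - w i‖ ^ 2 - 2 * ⟪z - x i, w i - x i⟫ := by
      rw [show w i - z = (w i - x i) + (x i - z) by abel, norm_add_sq_real]
      have e1 : ‖w i - x i‖ = ‖x i - w i‖ := norm_sub_rev _ _
      have e2 : ⟪w i - x i, x i - z⟫ = - ⟪z - x i, w i - x i⟫ := by
        rw [real_inner_comm, show x i - z = -(z - x i) by abel, inner_neg_left]
      rw [e1, e2]; ring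
    have e1 : 2 * β i * (L (w i) + ⟪x i - w i, gradL (w i)⟫ + ‖x i - w i‖ ^ 2 / (2 * β i))
        = 2 * β i * (L (w i) + ⟪x i - w i, gradL (w i)⟫) + ‖x i - w i‖ ^ 2 := by
      field_simp
    have h1' := (mul_le_mul_of_nonneg_left h1 h2β).trans_eq e1
    have h2' := mul_le_mul_of_nonneg_left h2 h2β
    have e3 : 2 * β i * (R (x i) + (β i)⁻¹ * (⟪z - x i, w i - x i⟫
          - β i * ⟪z - x i, gradL (w i)⟫) - (εs i) ^ 2 / (2 * β i))
        = 2 * β i * R (x i) + 2 * (⟪z - x i, w i - x i⟫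
          - β i * ⟪z - x i, gradL (w i)⟫) - (εs i) ^ 2 := by
      field_simp
    have h3' := mul_le_mul_of_nonneg_left h3.le h2β
    rw [e3] at h3'
    have hABC' : 2 * β i * (⟪x i - w i, gradL (w i)⟫ - ⟪z - w i, gradL (w i)⟫
        + ⟪z - x i, gradL (w i)⟫) = 0 := by rw [hABC, mul_zero]
    rw [hf (x i), hf z]
    rw [show ‖w i - z‖ ^ 2 - ‖x i - z‖ ^ 2 + (εs i) ^ 2
        = (‖x i - w i‖ ^ 2 - 2 * ⟪z - x i, w i - x i⟫) + (εs i) ^ 2 from by rw [hD]]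
    nlinarith [h1', h2', h3', hABC']
  -- the auxiliary sequence v
  set v : ℤ → E := fun j => θ j • x j - (θ j - 1) • x (j - 1) - xstar with hv
  have keyC : ∀ i : ℤ, 1 ≤ i →
      2 * β i * (θ i) ^ 2 * (f (x i) - f xstar)
        ≤ 2 * β i * θ i * (θ i - 1) * (f (x (i - 1)) - f xstar)
          + ‖v (i - 1)‖ ^ 2 - ‖v i‖ ^ 2 + (θ i) ^ 2 * (εs i) ^ 2 := by
    intro i hi
    have hβ : 0 < β i := hβpos i hi
    have hθi : 1 ≤ θ i := hθge1 i hi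
    have hθpos : 0 < θ i := by linarith
    have hθne : θ i ≠ 0 := ne_of_gt hθpos
    set t : ℝ := (θ i)⁻¹ with ht
    have ht0 : 0 ≤ t := by positivity
    have ht1 : t ≤ 1 := by rw [ht]; exact inv_le_one_of_one_le₀ hθi
    set z : E := (1 - t) • x (i - 1) + t • xstar with hz
    have hzC : z ∈ C := hCconv (hxC (i - 1) (by omega)) hxstarC (by linarith) ht0 (by ring)
    have hfz : f z ≤ (1 - t) * f (x (i - 1)) + t * f xstar :=
      hfconv.2 (Set.mem_univ _) (Set.mem_univ _) (by linarith) ht0 (by ring)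
    set y : E := x (i - 1) + ((θ (i - 1) - 1) / θ i) • (x (i - 1) - x (i - 2)) with hy
    have hwz : ‖w i - z‖ ≤ ‖y - z‖ := by
      rw [hw i hi, ← hy]
      exact aux_proj hCne hCconv hPmem hPproj y hzC
    have hv1 : v (i - 1) = θ i • (y - z) := by
      simp only [hv, hy, hz, ht, show i - 1 - 1 = i - 2 from by ring]
      match_scalars <;> field_simp <;> ring
    have hv2 : v i = θ i • (x i - z) := by
      simp only [hv, hz, ht]
      match_scalars <;> field_simp
    have hn1 : ‖v (i - 1)‖ ^ 2 = (θ i) ^ 2 * ‖y - z‖ ^ 2 := by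
      rw [hv1, norm_smul, Real.norm_eq_abs, abs_of_pos hθpos, mul_pow]
    have hn2 : ‖v i‖ ^ 2 = (θ i) ^ 2 * ‖x i - z‖ ^ 2 := by
      rw [hv2, norm_smul, Real.norm_eq_abs, abs_of_pos hθpos, mul_pow]
    have hA := keyA i hi z
    have hwz2 : ‖w i - z‖ ^ 2 ≤ ‖y - z‖ ^ 2 := by
      have h := mul_self_le_mul_self (norm_nonneg _) hwz
      rwa [← pow_two, ← pow_two] at h
    have hchain : 2 * β i * (f (x i) - ((1 - t) * f (x (i - 1)) + t * f xstar))
        ≤ ‖y - z‖ ^ 2 - ‖x i - z‖ ^ 2 + (εs i) ^ 2 := by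
      have hmm := mul_le_mul_of_nonneg_left
        (sub_le_sub_left hfz (f (x i))) (by positivity : (0:ℝ) ≤ 2 * β i)
      linarith [hA, hwz2, hmm]
    have hmul := mul_le_mul_of_nonneg_left hchain (sq_nonneg (θ i))
    have hLeq : (θ i) ^ 2 * (2 * β i * (f (x i) - ((1 - t) * f (x (i - 1)) + t * f xstar)))
        = 2 * β i * (θ i) ^ 2 * (f (x i) - f xstar)
          - 2 * β i * θ i * (θ i - 1) * (f (x (i - 1)) - f xstar) := by
      rw [ht]; field_simp; ring
    have hReq : (θ i) ^ 2 * (‖y - z‖ ^ 2 - ‖x i - z‖ ^ 2 + (εs i) ^ 2)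
        = ‖v (i - 1)‖ ^ 2 - ‖v i‖ ^ 2 + (θ i) ^ 2 * (εs i) ^ 2 := by
      rw [hn1, hn2]; ring
    rw [hLeq, hReq] at hmul
    linarith
  -- main telescoping bound, by induction
  have main : ∀ k : ℤ, 1 ≤ k →
      (∑ i ∈ Finset.Icc 1 (k - 1), 2 * π i * (f (x i) - f xstar))
        + 2 * β k * (θ k) ^ 2 * (f (x k) - f xstar) + ‖v k‖ ^ 2
      ≤ ‖x 0 - xstar‖ ^ 2 + ∑ i ∈ Finset.Icc 1 k, (θ i) ^ 2 * (εs i) ^ 2 := by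
    refine Int.le_induction ?_ ?_
    ·
      have hC1 := keyC 1 le_rfl
      rw [show (1:ℤ) - 1 = 0 from by norm_num] at hC1 ⊢
      have hv0 : v 0 = x 0 - xstar := by
        simp [hv, hθ0]
      rw [Finset.Icc_eq_empty (by norm_num : ¬(1:ℤ) ≤ 0), Finset.sum_empty]
      rw [Finset.Icc_self, Finset.sum_singleton]
      rw [hθ1] at hC1 ⊢
      rw [hv0] at hC1
      linarith
    · intro k hk ih
      have hC := keyC (k + 1) (by omega)
      rw [show k + 1 - 1 = k from by ring] at hC ⊢
      have hnotmem : k ∉ Finset.Icc (1:ℤ) (k - 1) := by simp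
      have hsplit1 : Finset.Icc (1:ℤ) k = insert k (Finset.Icc 1 (k - 1)) := by
        ext j; simp only [Finset.mem_Icc, Finset.mem_insert]; omega
      have hnotmem2 : (k + 1) ∉ Finset.Icc (1:ℤ) k := by simp
      have hsplit2 : Finset.Icc (1:ℤ) (k + 1) = insert (k + 1) (Finset.Icc 1 k) := by
        ext j; simp only [Finset.mem_Icc, Finset.mem_insert]; omega
      rw [hsplit2, Finset.sum_insert hnotmem2]
      rw [hsplit1] at ih ⊢
      simp only [Finset.sum_insert hnotmem] at ih ⊢
      rw [hπ k] at *
      linarith [ih, hC]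
  refine ⟨hπnonneg, ?_⟩
  intro k hk
  have hm := main k (by omega)
  have hΔk : 0 ≤ f (x k) - f xstar := sub_nonneg.mpr (hmin _)
  have hβk : 0 < β k := hβpos k (by omega)
  have hterm : 0 ≤ 2 * β k * (θ k) ^ 2 * (f (x k) - f xstar) :=
    mul_nonneg (mul_nonneg (by positivity) (sq_nonneg _)) hΔk
  have hsum2 : ∑ i ∈ Finset.Icc 1 (k - 1), 2 * π i * (f (x i) - f xstar)
      = 2 * ∑ i ∈ Finset.Icc 1 (k - 1), π i * (f (x i) - f xstar) := by
    rw [Finset.mul_sum]; exact Finset.sum_congr rfl fun i _ => by ring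
  have hvk : 0 ≤ ‖v k‖ ^ 2 := sq_nonneg _
  linarith [hm, hterm, hvk, hsum2.ge, hsum2.le]
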